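/- Jacobi's determinantal identity: for a matrix $A$ over a commutative ring, row multi-index $I$, column multi-index $J$ of equal size, and additional row indices $\alpha,\beta\notin I$ and column indices $\gamma,\delta\notin J$, one has $A_{(\alpha\beta I)}^{(\gamma\delta J)}\,A_I^J = A_{(\alpha I)}^{(\gamma J)}A_{(\beta I)}^{(\delta J)} - A_{(\alpha I)}^{(\delta J)}A_{(\beta I)}^{(\gamma J)}$, where $A_K^L$ denotes the minor of $A$ with ordered row set $K$ and ordered column set $L$, and $(\alpha I)$ denotes prepending $\alpha$ to $I$. -/
import Mathlib


open Matrix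

private def sumEquiv (r : ℕ) : Fin 2 ⊕ Fin r ≃ Fin (r + 2) :=
  finSumFinEquiv.trans (finCongr (Nat.add_comm 2 r))

private lemma sumEquiv_inl (r : ℕ) (i : Fin 2) :
    sumEquiv r (Sum.inl i) = (i.castLE (by omega)) := by
  ext; simp [sumEquiv, finSumFinEquiv]

private lemma sumEquiv_inr (r : ℕ) (k : Fin r) :
    sumEquiv r (Sum.inr k) = k.succ.succ := by
  ext; simp [sumEquiv, finSumFinEquiv]

private theorem dodgson_mul {R : Type*} [CommRing R] {r : ℕ}
    (M : Matrix (Fin (r + 2)) (Fin (r + 2)) R) :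
    M.det * (M.adjugate 0 0 * M.adjugate 1 1 - M.adjugate 0 1 * M.adjugate 1 0) =
      M.det * (M.det *
        (M.submatrix (fun p : Fin r => p.succ.succ) (fun q : Fin r => q.succ.succ)).det) := by
  set e := sumEquiv r with he
  set P : Matrix (Fin 2) (Fin 2) R := of fun i j => M.adjugate (e (.inl i)) (e (.inl j)) with hP
  set Q : Matrix (Fin r) (Fin 2) R := of fun k j => M.adjugate (e (.inr k)) (e (.inl j)) with hQ
  set B : Matrix (Fin (r + 2)) (Fin (r + 2)) R :=
    (fromBlocks P 0 Q 1).submatrix e.symm e.symm with hB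
  have hBcol : ∀ (k : Fin (r + 2)) (j : Fin 2), B k (e (.inl j)) = M.adjugate k (e (.inl j)) := by
    intro k j
    have : B k (e (.inl j)) = (fromBlocks P 0 Q 1) (e.symm k) ((.inl j) : Fin 2 ⊕ Fin r) := by
      simp [hB]
    rw [this]
    rcases h : e.symm k with s | s
    · have hk : k = e (.inl s) := by rw [← h, Equiv.apply_symm_apply]
      simp [hk, fromBlocks, hP]
    · have hk : k = e (.inr s) := by rw [← h, Equiv.apply_symm_apply]
      simp [hk, fromBlocks, hQ]
  have hBcolr : ∀ (k : Fin (r + 2)) (l : Fin r),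
      B k (e (.inr l)) = if k = e (.inr l) then 1 else 0 := by
    intro k l
    have : B k (e (.inr l)) = (fromBlocks P 0 Q 1) (e.symm k) ((.inr l) : Fin 2 ⊕ Fin r) := by
      simp [hB]
    rw [this]
    rcases h : e.symm k with s | s
    · have hk : k = e (.inl s) := by rw [← h, Equiv.apply_symm_apply]
      have : k ≠ e (.inr l) := by
        rw [hk]; exact fun hh => by simpa using e.injective hh
      simp [fromBlocks, this]
    · have hk : k = e (.inr s) := by rw [← h, Equiv.apply_symm_apply]
      have : k = e (.inr l) ↔ s = l := by
        rw [hk]; constructor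
        · intro hh; simpa using e.injective hh
        · rintro rfl; rfl
      simp [fromBlocks, Matrix.one_apply, this, hk]
  -- det B
  have hdetB : B.det = P.det := by
    rw [hB, det_submatrix_equiv_self, det_fromBlocks_zero₁₂, det_one, mul_one]
  -- M * B
  have hMB : ((M * B).submatrix e e) =
      fromBlocks (M.det • (1 : Matrix (Fin 2) (Fin 2) R))
        (of fun i l => M (e (.inl i)) (e (.inr l))) 0
        (of fun k l => M (e (.inr k)) (e (.inr l))) := by
    ext s t
    rcases s with s | s <;> rcases t with t | t <;>
      simp only [submatrix_apply, mul_apply]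
    · have : ∀ k, M (e (.inl s)) k * B k (e (.inl t)) =
          M (e (.inl s)) k * M.adjugate k (e (.inl t)) := fun k => by rw [hBcol]
      rw [Finset.sum_congr rfl fun k _ => this k]
      have := congrFun (congrFun (mul_adjugate M) (e (.inl s))) (e (.inl t))
      rw [mul_apply] at this
      rw [this]
      simp [fromBlocks, Matrix.one_apply, smul_eq_mul, e.injective.eq_iff]
    · have : ∀ k, M (e (.inl s)) k * B k (e (.inr t)) =
          if k = e (.inr t) then M (e (.inl s)) k else 0 := fun k => by
        rw [hBcolr]; split <;> simp
      rw [Finset.sum_congr rfl fun k _ => this k, Finset.sum_ite_eq' _ _ _]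
      simp [fromBlocks]
    · have : ∀ k, M (e (.inr s)) k * B k (e (.inl t)) =
          M (e (.inr s)) k * M.adjugate k (e (.inl t)) := fun k => by rw [hBcol]
      rw [Finset.sum_congr rfl fun k _ => this k]
      have := congrFun (congrFun (mul_adjugate M) (e (.inr s))) (e (.inl t))
      rw [mul_apply] at this
      rw [this]
      have : e (.inr s) ≠ e (.inl t) := fun hh => by simpa using e.injective hh
      simp [fromBlocks, Matrix.one_apply, this]
    · have : ∀ k, M (e (.inr s)) k * B k (e (.inr t)) =
          if k = e (.inr t) then M (e (.inr s)) k else 0 := fun k => by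
        rw [hBcolr]; split <;> simp
      rw [Finset.sum_congr rfl fun k _ => this k, Finset.sum_ite_eq' _ _ _]
      simp [fromBlocks]
  have hdetMB : (M * B).det = M.det * M.det *
      (M.submatrix (fun p : Fin r => p.succ.succ) (fun q : Fin r => q.succ.succ)).det := by
    have h1 : (M * B).det = ((M * B).submatrix e e).det := (det_submatrix_equiv_self e _).symm
    rw [h1, hMB, det_fromBlocks_zero₂₁, det_smul, det_one, mul_one]
    have h2 : (of fun k l => M (e (.inr k)) (e (.inr l))) =
        M.submatrix (fun p : Fin r => p.succ.succ) (fun q : Fin r => q.succ.succ) := by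
      ext k l; simp [sumEquiv_inr, he]
    rw [h2]
    simp [Fintype.card_fin]
    ring
  have key : M.det * B.det = M.det * M.det *
      (M.submatrix (fun p : Fin r => p.succ.succ) (fun q : Fin r => q.succ.succ)).det := by
    rw [← det_mul, hdetMB]
  have hP2 : P.det = M.adjugate 0 0 * M.adjugate 1 1 - M.adjugate 0 1 * M.adjugate 1 0 := by
    rw [det_fin_two]
    have h0 : e (.inl 0) = (0 : Fin (r + 2)) := by rw [sumEquiv_inl]; rfl
    have h1 : e (.inl 1) = (1 : Fin (r + 2)) := by rw [sumEquiv_inl]; rfl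
    simp [hP, h0, h1]
  rw [← hP2, ← hdetB, key]; ring

private theorem dodgson {R : Type*} [CommRing R] {r : ℕ}
    (M : Matrix (Fin (r + 2)) (Fin (r + 2)) R) :
    M.adjugate 0 0 * M.adjugate 1 1 - M.adjugate 0 1 * M.adjugate 1 0 =
      M.det * (M.submatrix (fun p : Fin r => p.succ.succ) (fun q : Fin r => q.succ.succ)).det := by
  let X := mvPolynomialX (Fin (r + 2)) (Fin (r + 2)) ℤ
  have hX : X.adjugate 0 0 * X.adjugate 1 1 - X.adjugate 0 1 * X.adjugate 1 0 =
      X.det * (X.submatrix (fun p : Fin r => p.succ.succ) (fun q : Fin r => q.succ.succ)).det :=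
    mul_left_cancel₀ (det_mvPolynomialX_ne_zero _ ℤ) (dodgson_mul X)
  let f : MvPolynomial (Fin (r + 2) × Fin (r + 2)) ℤ →+* R :=
    MvPolynomial.eval₂Hom (Int.castRingHom R) (fun p => M p.1 p.2)
  have hfX : f.mapMatrix X = M := mvPolynomialX_map_eval₂ _ M
  have := congrArg f hX
  rw [map_sub, _root_.map_mul, _root_.map_mul] at this
  have hXM : X.map ⇑f = M := hfX
  have hadj : ∀ i j, f (X.adjugate i j) = M.adjugate i j := by
    intro i j
    have h := congrFun (congrFun (f.map_adjugate X) i) j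
    simp only [RingHom.mapMatrix_apply] at h
    rw [hXM] at h
    simpa [Matrix.map_apply] using h
  have hsub : f (X.submatrix (fun p : Fin r => p.succ.succ)
      (fun q : Fin r => q.succ.succ)).det =
      (M.submatrix (fun p : Fin r => p.succ.succ) (fun q : Fin r => q.succ.succ)).det := by
    rw [RingHom.map_det]
    congr 1
    ext i j
    have := congrFun (congrFun hfX (Fin.succ (Fin.succ i))) (Fin.succ (Fin.succ j))
    simpa using this
  have hdet : f X.det = M.det := by rw [RingHom.map_det, hfX]
  rw [hadj, hadj, hadj, hadj, _root_.map_mul, hdet, hsub] at this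
  exact this



/-- Jacobi's determinantal (Desnanot–Jacobi) identity for minors:
`A_{(αβI)}^{(γδJ)} A_I^J = A_{(αI)}^{(γJ)} A_{(βI)}^{(δJ)} − A_{(αI)}^{(δJ)} A_{(βI)}^{(γJ)}`. -/
theorem stmt11 {R : Type*} [CommRing R] {n r : ℕ} (A : Matrix (Fin n) (Fin n) R)
    (I J : Fin r → Fin n) (α β γ δ : Fin n)
    (hα : ∀ p, α ≠ I p) (hβ : ∀ p, β ≠ I p) (hαβ : α ≠ β)
    (hγ : ∀ q, γ ≠ J q) (hδ : ∀ q, δ ≠ J q) (hγδ : γ ≠ δ) :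
    Matrix.det (Matrix.of fun p q : Fin (r + 2) =>
        A ((Fin.cons α (Fin.cons β I) : Fin (r + 2) → Fin n) p)
          ((Fin.cons γ (Fin.cons δ J) : Fin (r + 2) → Fin n) q)) *
      Matrix.det (Matrix.of fun p q : Fin r => A (I p) (J q))
    = Matrix.det (Matrix.of fun p q : Fin (r + 1) =>
          A ((Fin.cons α I : Fin (r + 1) → Fin n) p) ((Fin.cons γ J : Fin (r + 1) → Fin n) q)) *
        Matrix.det (Matrix.of fun p q : Fin (r + 1) =>
          A ((Fin.cons β I : Fin (r + 1) → Fin n) p) ((Fin.cons δ J : Fin (r + 1) → Fin n) q))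
      - Matrix.det (Matrix.of fun p q : Fin (r + 1) =>
          A ((Fin.cons α I : Fin (r + 1) → Fin n) p) ((Fin.cons δ J : Fin (r + 1) → Fin n) q)) *
        Matrix.det (Matrix.of fun p q : Fin (r + 1) =>
          A ((Fin.cons β I : Fin (r + 1) → Fin n) p) ((Fin.cons γ J : Fin (r + 1) → Fin n) q)) := by
  have h10 : (1 : Fin (r + 2)).succAbove 0 = 0 := by
    ext; simp [Fin.succAbove, Fin.lt_def]
  have h1s : ∀ q : Fin r, (1 : Fin (r + 2)).succAbove q.succ = q.succ.succ := fun q => by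
    ext; simp [Fin.succAbove, Fin.lt_def]
  have hcons1 : ∀ (x y : Fin n) (f : Fin r → Fin n) (p : Fin (r + 1)),
      (Fin.cons x (Fin.cons y f) : Fin (r + 2) → Fin n) ((1 : Fin (r + 2)).succAbove p) =
        (Fin.cons x f : Fin (r + 1) → Fin n) p := by
    intro x y f p
    induction p using Fin.cases with
    | zero => rw [h10]; simp
    | succ q => rw [h1s]; simp
  have hcons0 : ∀ (x y : Fin n) (f : Fin r → Fin n) (p : Fin (r + 1)),
      (Fin.cons x (Fin.cons y f) : Fin (r + 2) → Fin n) ((0 : Fin (r + 2)).succAbove p) =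
        (Fin.cons y f : Fin (r + 1) → Fin n) p := by
    intro x y f p
    rw [Fin.succAbove_zero]
    simp
  set M : Matrix (Fin (r + 2)) (Fin (r + 2)) R := Matrix.of fun p q =>
      A ((Fin.cons α (Fin.cons β I) : Fin (r + 2) → Fin n) p)
        ((Fin.cons γ (Fin.cons δ J) : Fin (r + 2) → Fin n) q) with hM
  have hinner : (Matrix.of fun p q : Fin r => A (I p) (J q)) =
      M.submatrix (fun p : Fin r => p.succ.succ) (fun q : Fin r => q.succ.succ) := by
    ext p q; simp [hM]
  have hαγ : (Matrix.of fun p q : Fin (r + 1) =>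
      A ((Fin.cons α I : Fin (r + 1) → Fin n) p) ((Fin.cons γ J : Fin (r + 1) → Fin n) q)) =
      M.submatrix ((1 : Fin (r + 2)).succAbove) ((1 : Fin (r + 2)).succAbove) := by
    ext p q; simp [hM, hcons1]
  have hβδ : (Matrix.of fun p q : Fin (r + 1) =>
      A ((Fin.cons β I : Fin (r + 1) → Fin n) p) ((Fin.cons δ J : Fin (r + 1) → Fin n) q)) =
      M.submatrix ((0 : Fin (r + 2)).succAbove) ((0 : Fin (r + 2)).succAbove) := by
    ext p q; simp [hM, hcons0]
  have hαδ : (Matrix.of fun p q : Fin (r + 1) =>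
      A ((Fin.cons α I : Fin (r + 1) → Fin n) p) ((Fin.cons δ J : Fin (r + 1) → Fin n) q)) =
      M.submatrix ((1 : Fin (r + 2)).succAbove) ((0 : Fin (r + 2)).succAbove) := by
    ext p q; simp [hM, hcons0, hcons1]
  have hβγ : (Matrix.of fun p q : Fin (r + 1) =>
      A ((Fin.cons β I : Fin (r + 1) → Fin n) p) ((Fin.cons γ J : Fin (r + 1) → Fin n) q)) =
      M.submatrix ((0 : Fin (r + 2)).succAbove) ((1 : Fin (r + 2)).succAbove) := by
    ext p q; simp [hM, hcons0, hcons1]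
  rw [hinner, hαγ, hβδ, hαδ, hβγ, ← dodgson M]
  rw [Matrix.adjugate_fin_succ_eq_det_submatrix, Matrix.adjugate_fin_succ_eq_det_submatrix,
    Matrix.adjugate_fin_succ_eq_det_submatrix, Matrix.adjugate_fin_succ_eq_det_submatrix]
  simp [Fin.val_zero, Fin.val_one]
  ring
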